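/- Let C be a skeletal finite EI category satisfying the Unique Factorization Property, and let α₁ : x₁ → y₁ and α₂ : x₂ → y₂ be unfactorizable morphisms that do NOT lie in the same biset orbit (i.e., there are no automorphisms g, h with α₁ = h α₂ g). Then in the category algebra kC, the left ideals kC·α₁ and kC·α₂ intersect trivially: kC·α₁ ∩ kC·α₂ = 0. -/

import Mathlib

open CategoryTheory
open scoped Classical

/-- Witness that `A` is the category algebra `kC` of the finite category `C`: it has a
`k`-basis indexed by the morphisms of `C`, the product of two basis elements is the basis
element of their composite when composable and `0` otherwise, and the identity element is
the sum of the identity morphisms. -/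
structure CategoryAlgebraData (k : Type*) [Field k] (C : Type*) [Category C] [Fintype C]
    (A : Type*) [Ring A] [Algebra k A] where
  basis : Module.Basis (Σ x y : C, x ⟶ y) k A
  basis_mul_basis : ∀ (x₁ y₁ x₂ y₂ : C) (f : x₁ ⟶ y₁) (g : x₂ ⟶ y₂),
    basis ⟨x₁, y₁, f⟩ * basis ⟨x₂, y₂, g⟩ =
      if h : y₂ = x₁ then basis ⟨x₂, y₁, g ≫ eqToHom h ≫ f⟩ else 0
  one_def : (1 : A) = ∑ x : C, basis ⟨x, x, 𝟙 x⟩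

/-- A morphism is unfactorizable if it is not an isomorphism and in any factorization into
two morphisms one factor is an isomorphism. -/
def Unfactorizable {C : Type*} [Category C] {x z : C} (α : x ⟶ z) : Prop :=
  ¬ IsIso α ∧ ∀ (y : C) (β : x ⟶ y) (γ : y ⟶ z), α = β ≫ γ → IsIso β ∨ IsIso γ

/-- A path in a category all of whose edges are unfactorizable morphisms. -/
inductive PathUnfact {C : Type*} [Category C] : ∀ {x y : C}, Quiver.Path x y → Prop
  | nil {x : C} : PathUnfact (Quiver.Path.nil : Quiver.Path x x)
  | cons {x y z : C} {p : Quiver.Path x y} {e : y ⟶ z} :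
      PathUnfact p → Unfactorizable e → PathUnfact (p.cons e)

/-- `TwistedBy p q g'` says that the paths `p = (α₁, …, αₙ)` and `q = (β₁, …, βₙ)` pass
through the same objects and there are automorphisms `hᵢ` of the intermediate objects with
`β₁ = h₁ ∘ α₁`, `βᵢ = hᵢ ∘ αᵢ ∘ hᵢ₋₁⁻¹`, and `βₙ = g' ∘ αₙ ∘ hₙ₋₁⁻¹`, where `g'` is the
final twist at the common target. -/
inductive TwistedBy {C : Type*} [Category C] :
    ∀ {x y : C}, Quiver.Path x y → Quiver.Path x y → (y ≅ y) → Prop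
  | nil {x : C} :
      TwistedBy (Quiver.Path.nil : Quiver.Path x x) Quiver.Path.nil (Iso.refl x)
  | cons {x w y : C} {p q : Quiver.Path x w} (g : w ≅ w) (g' : y ≅ y) (e : w ⟶ y) :
      TwistedBy p q g → TwistedBy (p.cons e) (q.cons (g.inv ≫ e ≫ g'.hom)) g'

/-- The Unique Factorization Property: any two decompositions of a non-isomorphism into
unfactorizable morphisms have the same length, pass through the same intermediate objects,
and differ only by automorphisms of the intermediate objects. -/
def SatisfiesUFP (C : Type*) [Category C] : Prop :=
  ∀ {x y : C} (p q : Quiver.Path x y), PathUnfact p → PathUnfact q →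
    ¬ IsIso (composePath p) → composePath p = composePath q → TwistedBy p q (Iso.refl y)

section Helpers

variable {C : Type*} [Category C]

/-- In an EI category, a morphism with a morphism backwards is an isomorphism. -/
lemma isIso_of_pair (hEI : ∀ (x : C) (f : x ⟶ x), IsIso f) {a b : C}
    (g : a ⟶ b) (h : b ⟶ a) : IsIso g := by
  have e1 : IsIso (g ≫ h) := hEI _ _
  have e2 : IsIso (h ≫ g) := hEI _ _
  refine ⟨h ≫ inv (g ≫ h), ?_, ?_⟩
  · rw [← Category.assoc, IsIso.hom_inv_id]
  · have : (h ≫ g) ≫ ((h ≫ inv (g ≫ h)) ≫ g) = (h ≫ g) ≫ 𝟙 b := by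
      simp only [Category.assoc, Category.comp_id]
      rw [← Category.assoc g h, IsIso.hom_inv_id_assoc]
    exact (cancel_epi (h ≫ g)).mp this

lemma unfact_comp_iso {x y : C} {α : x ⟶ y} (hα : Unfactorizable α) (δ : y ⟶ y)
    [IsIso δ] : Unfactorizable (α ≫ δ) := by
  constructor
  · intro h
    exact hα.1 (by simpa using (inferInstance : IsIso ((α ≫ δ) ≫ inv δ)))
  · intro w β γ hfac
    have : α = β ≫ (γ ≫ inv δ) := by
      rw [← Category.assoc, ← hfac, Category.assoc, IsIso.hom_inv_id, Category.comp_id]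
    rcases hα.2 w β (γ ≫ inv δ) this with hβ | hγ
    · exact Or.inl hβ
    · right
      have : γ = (γ ≫ inv δ) ≫ δ := by simp
      rw [this]; infer_instance

lemma PathUnfact.comp' {x y z : C} {p : Quiver.Path x y} {q : Quiver.Path y z}
    (hp : PathUnfact p) (hq : PathUnfact q) : PathUnfact (p.comp q) := by
  induction hq with
  | nil => exact hp
  | cons h u ih => exact PathUnfact.cons ih u

lemma twisted_length {x y : C} {p q : Quiver.Path x y} {g : y ≅ y}
    (h : TwistedBy p q g) : p.length = q.length := by
  induction h with
  | nil => rfl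
  | cons _ _ _ _ ih => simpa using ih

lemma twisted_head {x y : C} {p q : Quiver.Path x y} {g' : y ≅ y}
    (h : TwistedBy p q g') :
    ∀ {w₁ w₂ : C} (e : x ⟶ w₁) (f : x ⟶ w₂) (r : Quiver.Path w₁ y) (s : Quiver.Path w₂ y),
      p = e.toPath.comp r → q = f.toPath.comp s →
      ∃ (hw : w₁ = w₂) (t : w₁ ≅ w₁), f = (e ≫ t.hom) ≫ eqToHom hw := by
  induction h with
  | nil =>
    intro w₁ w₂ e f r s hp hq
    exfalso
    have := congrArg Quiver.Path.length hp
    simp only [Quiver.Path.length_comp, Quiver.Hom.toPath, Quiver.Path.length_nil,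
      Quiver.Path.length_cons] at this
    omega
  | @cons w y p q g g' e htw ih =>
    intro w₁ w₂ e' f r s hp hq
    cases r with
    | nil =>
      have hp' : p.cons e = Quiver.Path.nil.cons e' := hp
      injection hp' with hw hj hpe hee
      subst hw
      have hpnil : p = Quiver.Path.nil := eq_of_heq hpe
      have hee' : e = e' := eq_of_heq hee
      subst hpnil
      cases htw
      cases s with
      | nil =>
        have hq' : Quiver.Path.nil.cons ((Iso.refl _).inv ≫ e ≫ g'.hom)
            = Quiver.Path.nil.cons f := hq
        injection hq' with hw2 hj2 hq2 hff
        have hf : (Iso.refl _).inv ≫ e ≫ g'.hom = f := hff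
        refine ⟨rfl, g', ?_⟩
        rw [← hf, ← hee']
        simp
      | cons s₀ se =>
        exfalso
        have := congrArg Quiver.Path.length hq
        simp only [Quiver.Path.length_comp, Quiver.Hom.toPath, Quiver.Path.length_nil,
          Quiver.Path.length_cons] at this
        omega
    | cons r₀ re =>
      have hp' : p.cons e = (e'.toPath.comp r₀).cons re := hp
      injection hp' with hw hj hpe hee
      subst hw
      have hp0 : p = e'.toPath.comp r₀ := eq_of_heq hpe
      cases s with
      | nil =>
        exfalso
        have h1 := congrArg Quiver.Path.length hq
        have h2 := twisted_length htw
        have h3 := congrArg Quiver.Path.length hp0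
        simp only [Quiver.Path.length_comp, Quiver.Hom.toPath, Quiver.Path.length_nil,
          Quiver.Path.length_cons] at h1 h2 h3
        omega
      | cons s₀ se =>
        have hq' : q.cons (g.inv ≫ e ≫ g'.hom) = (f.toPath.comp s₀).cons se := hq
        injection hq' with hw2 hj2 hqe hse
        subst hw2
        exact ih e' f r₀ s₀ hp0 (eq_of_heq hqe)

/-- Every non-isomorphism factors as a path of unfactorizable morphisms. -/
lemma exists_unfact_path [Fintype C] (hEI : ∀ (x : C) (f : x ⟶ x), IsIso f) :
    ∀ (n : ℕ) {a b : C} (f : a ⟶ b),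
      Set.ncard {w : C | Nonempty (a ⟶ w) ∧ Nonempty (w ⟶ b)} < n → ¬ IsIso f →
      ∃ p : Quiver.Path a b, PathUnfact p ∧ composePath p = f := by
  intro n
  induction n with
  | zero => intro a b f hlt; omega
  | succ n ih =>
    intro a b f hlt hni
    by_cases hu : Unfactorizable f
    · exact ⟨f.toPath, PathUnfact.cons PathUnfact.nil hu, by simp [Quiver.Hom.toPath]⟩
    · rw [Unfactorizable, not_and] at hu
      push_neg at hu
      obtain ⟨w₀, β, γ, hfac, hβ, hγ⟩ := hu hni
      -- strict inclusion of intervals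
      have key : ∀ (a' b' : C), Nonempty (a ⟶ a') → Nonempty (b' ⟶ b) →
          (∀ u : b ⟶ b', False) →
          Set.ncard {w : C | Nonempty (a' ⟶ w) ∧ Nonempty (w ⟶ b')} <
          Set.ncard {w : C | Nonempty (a ⟶ w) ∧ Nonempty (w ⟶ b)} := by
        intro a' b' ⟨ia⟩ ⟨ib⟩ hnb
        apply Set.ncard_lt_ncard _ (Set.toFinite _)
        constructor
        · rintro w ⟨⟨g1⟩, ⟨g2⟩⟩
          exact ⟨⟨ia ≫ g1⟩, ⟨g2 ≫ ib⟩⟩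
        · intro hsub
          have hb : b ∈ {w : C | Nonempty (a ⟶ w) ∧ Nonempty (w ⟶ b)} :=
            ⟨⟨f⟩, ⟨𝟙 b⟩⟩
          obtain ⟨⟨g1⟩, ⟨g2⟩⟩ := hsub hb
          exact hnb g2
      have hle : Set.ncard {w : C | Nonempty (a ⟶ w) ∧ Nonempty (w ⟶ b)} ≤ n := by omega
      have m1' : Set.ncard {w : C | Nonempty (a ⟶ w) ∧ Nonempty (w ⟶ w₀)} < n := by
        refine lt_of_lt_of_le (key a w₀ ⟨𝟙 a⟩ ⟨γ⟩ ?_) hle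
        intro u; exact hγ (isIso_of_pair hEI γ u)
      have m2' : Set.ncard {w : C | Nonempty (w₀ ⟶ w) ∧ Nonempty (w ⟶ b)} < n := by
        refine lt_of_lt_of_le ?_ hle
        apply Set.ncard_lt_ncard _ (Set.toFinite _)
        constructor
        · rintro w ⟨⟨g1⟩, ⟨g2⟩⟩
          exact ⟨⟨β ≫ g1⟩, ⟨g2⟩⟩
        · intro hsub
          have ha : a ∈ {w : C | Nonempty (a ⟶ w) ∧ Nonempty (w ⟶ b)} :=
            ⟨⟨𝟙 a⟩, ⟨f⟩⟩
          obtain ⟨⟨g1⟩, _⟩ := hsub ha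
          exact hβ (isIso_of_pair hEI β g1)
      obtain ⟨pβ, hpβ, hcβ⟩ := ih β m1' hβ
      obtain ⟨pγ, hpγ, hcγ⟩ := ih γ m2' hγ
      exact ⟨pβ.comp pγ, hpβ.comp' hpγ, by rw [composePath_comp, hcβ, hcγ, hfac]⟩

/-- A composite `α ≫ δ` with `α` unfactorizable, if not iso, factors as a path of
unfactorizables whose first edge is `α` post-composed with an automorphism. -/
lemma exists_headed [Fintype C] (hEI : ∀ (x : C) (f : x ⟶ x), IsIso f)
    (hskel : ∀ x y : C, (x ≅ y) → x = y)
    {x y z : C} (α : x ⟶ y) (hα : Unfactorizable α) (δ : y ⟶ z)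
    (hni : ¬ IsIso (α ≫ δ)) :
    ∃ (h : y ≅ y) (r : Quiver.Path y z),
      PathUnfact ((α ≫ h.hom).toPath.comp r) ∧
      composePath ((α ≫ h.hom).toPath.comp r) = α ≫ δ := by
  by_cases hδ : IsIso δ
  · have hz : y = z := hskel _ _ (asIso δ)
    subst hz
    exact ⟨asIso δ, Quiver.Path.nil,
      PathUnfact.cons PathUnfact.nil (unfact_comp_iso hα δ),
      by simp [Quiver.Hom.toPath]⟩
  · obtain ⟨q, hq, hcq⟩ := exists_unfact_path hEI
      (Set.ncard {w : C | Nonempty (y ⟶ w) ∧ Nonempty (w ⟶ z)} + 1) δ (by omega) hδ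
    refine ⟨Iso.refl y, q, ?_, ?_⟩
    · have : PathUnfact ((α ≫ (Iso.refl y).hom).toPath) := by
        refine PathUnfact.cons PathUnfact.nil ?_
        simpa using hα
      exact this.comp' hq
    · rw [composePath_comp, hcq]
      simp [Quiver.Hom.toPath]

/-- Key combinatorial fact: if composites `α₁ ≫ δ₁ = α₂ ≫ δ₂` agree then the
unfactorizable heads lie in the same orbit. -/
lemma orbit_of_eq [Fintype C] (hEI : ∀ (x : C) (f : x ⟶ x), IsIso f)
    (hskel : ∀ x y : C, (x ≅ y) → x = y) (hUFP : SatisfiesUFP C)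
    {x y₁ y₂ z : C} (α₁ : x ⟶ y₁) (α₂ : x ⟶ y₂)
    (h₁ : Unfactorizable α₁) (h₂ : Unfactorizable α₂)
    (δ₁ : y₁ ⟶ z) (δ₂ : y₂ ⟶ z) (heq : α₁ ≫ δ₁ = α₂ ≫ δ₂) :
    ∃ (ey : y₂ = y₁) (h : y₁ ≅ y₁), α₁ = α₂ ≫ eqToHom ey ≫ h.hom := by
  by_cases hiso : IsIso (α₁ ≫ δ₁)
  · exfalso
    exact h₁.1 (isIso_of_pair hEI α₁ (δ₁ ≫ inv (α₁ ≫ δ₁)))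
  · obtain ⟨g₁, r₁, hu₁, hc₁⟩ := exists_headed hEI hskel α₁ h₁ δ₁ hiso
    have hiso₂ : ¬ IsIso (α₂ ≫ δ₂) := heq ▸ hiso
    obtain ⟨g₂, r₂, hu₂, hc₂⟩ := exists_headed hEI hskel α₂ h₂ δ₂ hiso₂
    have htw := hUFP _ _ hu₁ hu₂ (by rw [hc₁]; exact hiso) (by rw [hc₁, hc₂, heq])
    obtain ⟨hw, t, ht⟩ := twisted_head htw (α₁ ≫ g₁.hom) (α₂ ≫ g₂.hom) r₁ r₂ rfl rfl
    subst hw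
    simp only [eqToHom_refl, Category.comp_id] at ht
    refine ⟨rfl, (g₁ ≪≫ t ≪≫ g₂.symm).symm, ?_⟩
    have h2' : α₂ = ((α₁ ≫ g₁.hom) ≫ t.hom) ≫ g₂.inv := by
      rw [← ht]; simp
    rw [h2']
    simp

/-- The set of morphism indices of the form `α ≫ δ`. -/
def Smul {C : Type*} [Category C] {x y : C} (α : x ⟶ y) : Set (Σ a b : C, a ⟶ b) :=
  Set.range (fun d : (Σ w : C, y ⟶ w) => (⟨x, d.1, α ≫ d.2⟩ : Σ a b : C, a ⟶ b))

end Helpers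

/-- If `α₁ : x₁ ⟶ y₁` and `α₂ : x₂ ⟶ y₂` are unfactorizable morphisms in a skeletal finite
EI category satisfying the UFP that do not lie in the same biset orbit, then the left
ideals `kC·α₁` and `kC·α₂` intersect trivially. -/
theorem stmt9 {k : Type*} [Field k] {C : Type*} [Category C] [Fintype C]
    [∀ x y : C, Finite (x ⟶ y)]
    (hEI : ∀ (x : C) (f : x ⟶ x), IsIso f)
    (hskel : ∀ x y : C, (x ≅ y) → x = y)
    (hUFP : SatisfiesUFP C)
    {A : Type*} [Ring A] [Algebra k A] (hA : CategoryAlgebraData k C A)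
    {x₁ y₁ x₂ y₂ : C} (α₁ : x₁ ⟶ y₁) (α₂ : x₂ ⟶ y₂)
    (h₁ : Unfactorizable α₁) (h₂ : Unfactorizable α₂)
    (horb : ¬ ∃ (ex : x₂ = x₁) (ey : y₂ = y₁) (g : x₁ ≅ x₁) (h : y₁ ≅ y₁),
      α₁ = g.hom ≫ eqToHom ex.symm ≫ α₂ ≫ eqToHom ey ≫ h.hom) :
    Ideal.span {hA.basis ⟨x₁, y₁, α₁⟩} ⊓ Ideal.span {hA.basis ⟨x₂, y₂, α₂⟩} = ⊥ := by
  classical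
  -- left multiples land in the span of the basis vectors indexed by S
  have claimA : ∀ {x y : C} (α : x ⟶ y) (r : A),
      r * hA.basis ⟨x, y, α⟩ ∈ Submodule.span k (hA.basis '' Smul α) := by
    intro x y α r
    have hr : r ∈ Submodule.span k (Set.range hA.basis) := hA.basis.mem_span r
    induction hr using Submodule.span_induction with
    | mem b hb =>
      obtain ⟨⟨a₁, b₁, g⟩, rfl⟩ := hb
      rw [hA.basis_mul_basis]
      split
      · next h =>
        apply Submodule.subset_span
        refine ⟨⟨x, b₁, α ≫ eqToHom h ≫ g⟩, ?_, rfl⟩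
        exact ⟨⟨b₁, eqToHom h ≫ g⟩, rfl⟩
      · exact Submodule.zero_mem _
    | zero => rw [zero_mul]; exact Submodule.zero_mem _
    | add u v _ _ hu hv => rw [add_mul]; exact Submodule.add_mem _ hu hv
    | smul c u _ hu => rw [smul_mul_assoc]; exact Submodule.smul_mem _ _ hu
  -- the index sets are disjoint
  have hdisj : Disjoint (Smul α₁) (Smul α₂) := by
    rw [Set.disjoint_left]
    rintro i ⟨⟨z, δ₁⟩, rfl⟩ ⟨⟨z', δ₂⟩, hi⟩
    injection hi with hx h2
    subst hx
    have h2' := eq_of_heq h2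
    injection h2' with hz h3
    subst hz
    have hmor : α₂ ≫ δ₂ = α₁ ≫ δ₁ := eq_of_heq h3
    obtain ⟨ey, h, hrel⟩ := orbit_of_eq hEI hskel hUFP α₁ α₂ h₁ h₂ δ₁ δ₂ hmor.symm
    exact horb ⟨rfl, ey, Iso.refl _, h, by simpa using hrel⟩
  -- conclude
  rw [eq_bot_iff]
  rintro u hu
  rw [Submodule.mem_inf] at hu
  obtain ⟨hu₁, hu₂⟩ := hu
  rw [Ideal.span, Submodule.mem_span_singleton] at hu₁ hu₂
  obtain ⟨r₁, hr₁⟩ := hu₁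
  obtain ⟨r₂, hr₂⟩ := hu₂
  have m₁ : u ∈ Submodule.span k (hA.basis '' Smul α₁) := by
    rw [← hr₁, smul_eq_mul]; exact claimA α₁ r₁
  have m₂ : u ∈ Submodule.span k (hA.basis '' Smul α₂) := by
    rw [← hr₂, smul_eq_mul]; exact claimA α₂ r₂
  have := (hA.basis.linearIndependent.disjoint_span_image hdisj).le_bot
    (Submodule.mem_inf.mpr ⟨m₁, m₂⟩)
  simpa using this
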